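/- The quantum advantage ratio R(n_p, n_e) = [(1+n_e+√(n_e(1+n_e)))/(1+n_e+√(n_p n_e(1+n_e)/(1+n_p)))]² is strictly decreasing in n_p for fixed n_e > 0. -/
import Mathlib


/-- The quantum advantage ratio is strictly decreasing in the probe energy. -/
theorem quantum_advantage_antitone (ne : ℝ) (hne : 0 < ne) :
    StrictAntiOn
      (fun np : ℝ =>
        ((1 + ne + Real.sqrt (ne * (1 + ne)))
          / (1 + ne + Real.sqrt (np * ne * (1 + ne) / (1 + np)))) ^ 2)
      (Set.Ioi 0) := by
  intro a ha b hb hab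
  simp only [Set.mem_Ioi] at ha hb
  have h1a : (0:ℝ) < 1 + a := by linarith
  have h1b : (0:ℝ) < 1 + b := by linarith
  have hc : (0:ℝ) < ne * (1 + ne) := by positivity
  have harg : a * ne * (1 + ne) / (1 + a) < b * ne * (1 + ne) / (1 + b) := by
    rw [div_lt_div_iff₀ h1a h1b]
    nlinarith
  have hargnn : 0 ≤ a * ne * (1 + ne) / (1 + a) := by positivity
  have hs : Real.sqrt (a * ne * (1 + ne) / (1 + a)) <
      Real.sqrt (b * ne * (1 + ne) / (1 + b)) := Real.sqrt_lt_sqrt hargnn harg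
  have hDa : 0 < 1 + ne + Real.sqrt (a * ne * (1 + ne) / (1 + a)) := by
    have := Real.sqrt_nonneg (a * ne * (1 + ne) / (1 + a)); linarith
  have hN : 0 < 1 + ne + Real.sqrt (ne * (1 + ne)) := by
    have := Real.sqrt_nonneg (ne * (1 + ne)); linarith
  have hdiv : (1 + ne + Real.sqrt (ne * (1 + ne))) /
      (1 + ne + Real.sqrt (b * ne * (1 + ne) / (1 + b))) <
      (1 + ne + Real.sqrt (ne * (1 + ne))) /
      (1 + ne + Real.sqrt (a * ne * (1 + ne) / (1 + a))) :=
    div_lt_div_of_pos_left hN hDa (by linarith)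
  have hnn : 0 ≤ (1 + ne + Real.sqrt (ne * (1 + ne))) /
      (1 + ne + Real.sqrt (b * ne * (1 + ne) / (1 + b))) := by
    apply div_nonneg hN.le; linarith [Real.sqrt_nonneg (b * ne * (1 + ne) / (1 + b))]
  exact pow_lt_pow_left₀ hdiv hnn (by norm_num)
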